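/- Let m, n ≥ 2 be coprime integers and u an integer with gcd(u, mn) = 1. For any Dirichlet character χ = χ₁χ₂ modulo mn, where χ₁ is a character mod m and χ₂ a character mod n, the generalized quadratic Gauss sum satisfies G(u, χ; mn) = χ₁(n)·χ₂(m)·G(un, χ₁; m)·G(um, χ₂; n). -/

import Mathlib

open Complex

/-- The generalized quadratic Gauss sum `G(n,χ;q) = Σ_{a=1}^{q} χ(a)·e(n·a²/q)`. -/
noncomputable def Ggen (n : ℤ) (q : ℕ) (χ : DirichletCharacter ℂ q) : ℂ :=
  ∑ a ∈ Finset.Icc 1 q,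
    χ (a : ZMod q) * Complex.exp (2 * Real.pi * Complex.I * (n * (a : ℂ) ^ 2 / (q : ℂ)))

/-- Auxiliary exponential `e(s/q)`. -/
noncomputable def GgenE (q : ℕ) (s : ℤ) : ℂ :=
  Complex.exp (2 * Real.pi * Complex.I * ((s : ℂ) / (q : ℂ)))

lemma GgenE_congr (q : ℕ) {s t : ℤ} (h : s ≡ t [ZMOD (q : ℤ)]) :
    GgenE q s = GgenE q t := by
  rcases eq_or_ne q 0 with rfl | hq
  · have : s = t := by simpa [Int.ModEq] using h
    rw [this]
  obtain ⟨k, hk⟩ := (Int.modEq_iff_dvd.mp h)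
  have hqc : (q : ℂ) ≠ 0 := by exact_mod_cast hq
  have ht : (t : ℂ) = s + q * k := by
    have : (t : ℤ) = s + (q : ℤ) * k := by linarith [hk]
    exact_mod_cast this
  unfold GgenE
  rw [ht, show ((s : ℂ) + q * k) / q = s / q + (k : ℤ) by push_cast; field_simp]
  rw [mul_add, Complex.exp_add,
    show (2 * (Real.pi : ℂ) * I * ((k : ℤ) : ℂ)) = ((k : ℤ) : ℂ) * (2 * Real.pi * I) by ring,
    Complex.exp_int_mul_two_pi_mul_I, mul_one]

lemma GgenE_sq_congr (q : ℕ) (N : ℤ) {s t : ℤ} (h : s ≡ t [ZMOD (q : ℤ)]) :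
    GgenE q (N * s ^ 2) = GgenE q (N * t ^ 2) :=
  GgenE_congr q ((h.pow 2).mul_left N)

lemma GgenE_split (m n : ℕ) (hm : m ≠ 0) (hn : n ≠ 0) (A B : ℤ) :
    GgenE (m * n) (n * A + m * B) = GgenE m A * GgenE n B := by
  unfold GgenE
  rw [← Complex.exp_add]
  congr 1
  have hmc : (m : ℂ) ≠ 0 := by exact_mod_cast hm
  have hnc : (n : ℂ) ≠ 0 := by exact_mod_cast hn
  push_cast
  field_simp

lemma Ggen_eq_sum_zmod (N : ℤ) (q : ℕ) [NeZero q] (χ : DirichletCharacter ℂ q) :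
    Ggen N q χ = ∑ x : ZMod q, χ x * GgenE q (N * (x.val : ℤ) ^ 2) := by
  have hq : q ≠ 0 := NeZero.ne q
  have key : ∀ a : ℕ,
      χ (a : ZMod q) * Complex.exp (2 * Real.pi * Complex.I * (N * (a : ℂ) ^ 2 / (q : ℂ)))
        = χ (a : ZMod q) * GgenE q (N * (((a : ZMod q).val : ℤ)) ^ 2) := by
    intro a
    congr 1
    have h1 : ((a : ZMod q).val : ℤ) ≡ (a : ℤ) [ZMOD (q : ℤ)] := by
      have : ((a : ZMod q).val : ℤ) = (a : ℤ) % q := by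
        rw [ZMod.val_natCast, Int.natCast_mod]
      rw [this]
      exact Int.emod_emod_of_dvd _ dvd_rfl
    rw [GgenE_sq_congr q N h1]
    unfold GgenE
    push_cast
    ring_nf
  unfold Ggen
  rw [Finset.sum_congr rfl (fun a _ => key a)]
  refine Finset.sum_bij' (fun a _ => ((a : ZMod q))) (fun x _ => if x.val = 0 then q else x.val)
    (fun a _ => Finset.mem_univ _) ?_ ?_ ?_ ?_
  · intro x _
    by_cases hx : x.val = 0
    · simp [hx, Finset.mem_Icc, Nat.one_le_iff_ne_zero, hq]
    · simp only [hx, if_false, Finset.mem_Icc]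
      exact ⟨Nat.one_le_iff_ne_zero.mpr hx, le_of_lt (ZMod.val_lt x)⟩
  · intro a ha
    simp only [Finset.mem_Icc] at ha
    beta_reduce
    rw [ZMod.val_natCast]
    rcases lt_or_eq_of_le ha.2 with h | rfl
    · rw [Nat.mod_eq_of_lt h, if_neg (by omega)]
    · simp
  · intro x _
    by_cases hx : x.val = 0
    · have : x = 0 := by
        have := ZMod.natCast_val (R := ZMod q) x
        rw [hx] at this
        simpa [ZMod.cast_id] using this.symm
      simp [hx, this]
    · simp only [hx, if_false]
      have := ZMod.natCast_val (R := ZMod q) x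
      simpa [ZMod.cast_id] using this
  · intro a _
    rfl

/-- multiplicativity of the generalized quadratic Gauss sum:
for coprime `m, n ≥ 2`, `u` coprime to `mn`, and `χ = χ₁χ₂` with `χ₁` mod `m`,
`χ₂` mod `n`, we have `G(u,χ;mn) = χ₁(n)·χ₂(m)·G(un,χ₁;m)·G(um,χ₂;n)`. -/
theorem Ggen_mul (m n : ℕ) (hm : 2 ≤ m) (hn : 2 ≤ n) (hmn : Nat.Coprime m n)
    (u : ℤ) (hu : IsCoprime u ((m : ℤ) * n))
    (χ₁ : DirichletCharacter ℂ m) (χ₂ : DirichletCharacter ℂ n)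
    (χ : DirichletCharacter ℂ (m * n))
    (hχ : χ = (DirichletCharacter.changeLevel (Dvd.intro n rfl) χ₁) *
        (DirichletCharacter.changeLevel (Dvd.intro_left m rfl) χ₂)) :
    Ggen u (m * n) χ =
      χ₁ (n : ZMod m) * χ₂ (m : ZMod n) * Ggen (u * n) m χ₁ * Ggen (u * m) n χ₂ := by
  have hm0 : m ≠ 0 := by omega
  have hn0 : n ≠ 0 := by omega
  have hM0 : m * n ≠ 0 := by positivity
  haveI : NeZero m := ⟨hm0⟩
  haveI : NeZero n := ⟨hn0⟩
  haveI : NeZero (m * n) := ⟨hM0⟩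
  have hdm : m ∣ m * n := Dvd.intro n rfl
  have hdn : n ∣ m * n := Dvd.intro_left m rfl
  -- the CRT map
  set g : ZMod m × ZMod n → ZMod (m * n) :=
    fun p => ((n * p.1.val + m * p.2.val : ℕ) : ZMod (m * n)) with hg
  -- casts of g
  have hcastm : ∀ p : ZMod m × ZMod n,
      (ZMod.cast (g p) : ZMod m) = (n : ZMod m) * p.1 := by
    intro p
    rw [hg]
    simp only
    rw [ZMod.cast_natCast hdm]
    push_cast
    simp [ZMod.natCast_self, ZMod.cast_id]
  have hcastn : ∀ p : ZMod m × ZMod n,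
      (ZMod.cast (g p) : ZMod n) = (m : ZMod n) * p.2 := by
    intro p
    rw [hg]
    simp only
    rw [ZMod.cast_natCast hdn]
    push_cast
    simp [ZMod.natCast_self, ZMod.cast_id]
  -- units
  have hnum : IsUnit (n : ZMod m) := (ZMod.isUnit_iff_coprime n m).mpr hmn.symm
  have hmun : IsUnit (m : ZMod n) := (ZMod.isUnit_iff_coprime m n).mpr hmn
  -- g is bijective
  have hg_inj : Function.Injective g := by
    intro p p' h
    have h1 : (n : ZMod m) * p.1 = (n : ZMod m) * p'.1 := by
      rw [← hcastm p, ← hcastm p', h]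
    have h2 : (m : ZMod n) * p.2 = (m : ZMod n) * p'.2 := by
      rw [← hcastn p, ← hcastn p', h]
    have e1 : p.1 = p'.1 := hnum.mul_left_cancel h1
    have e2 : p.2 = p'.2 := hmun.mul_left_cancel h2
    exact Prod.ext e1 e2
  have hg_bij : Function.Bijective g := by
    rw [Fintype.bijective_iff_injective_and_card]
    refine ⟨hg_inj, ?_⟩
    simp [ZMod.card]
  -- character factorization
  have hchar : ∀ p : ZMod m × ZMod n,
      χ (g p) = χ₁ ((n : ZMod m) * p.1) * χ₂ ((m : ZMod n) * p.2) := by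
    intro p
    by_cases hgu : IsUnit (g p)
    · obtain ⟨a, ha⟩ := hgu
      have e1 : (((a : ZMod (m * n)) : ZMod (m * n)).cast : ZMod m) = (n : ZMod m) * p.1 := by
        rw [ha]; exact hcastm p
      have e2 : (((a : ZMod (m * n)) : ZMod (m * n)).cast : ZMod n) = (m : ZMod n) * p.2 := by
        rw [ha]; exact hcastn p
      rw [← ha, hχ, MulChar.mul_apply,
        DirichletCharacter.changeLevel_eq_cast_of_dvd χ₁ hdm a,
        DirichletCharacter.changeLevel_eq_cast_of_dvd χ₂ hdn a, e1, e2]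
    · rw [MulChar.map_nonunit χ hgu]
      -- one of the two factors on the right vanishes
      have hco : ¬ Nat.Coprime (g p).val (m * n) := by
        intro hc
        apply hgu
        have := (ZMod.isUnit_iff_coprime (g p).val (m * n)).mpr hc
        rwa [ZMod.natCast_val, ZMod.cast_id] at this
      rw [Nat.coprime_mul_iff_right] at hco
      push_neg at hco
      by_cases hcm : Nat.Coprime (g p).val m
      · -- then not coprime to n
        have hcn : ¬ Nat.Coprime (g p).val n := fun h => hco hcm h
        have : ¬ IsUnit ((m : ZMod n) * p.2) := by
          rw [← hcastn p, ← ZMod.natCast_val]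
          intro h
          exact hcn ((ZMod.isUnit_iff_coprime _ _).mp h)
        rw [MulChar.map_nonunit χ₂ this, mul_zero]
      · have : ¬ IsUnit ((n : ZMod m) * p.1) := by
          rw [← hcastm p, ← ZMod.natCast_val]
          intro h
          exact hcm ((ZMod.isUnit_iff_coprime _ _).mp h)
        rw [MulChar.map_nonunit χ₁ this, zero_mul]
  -- exponential factorization
  have hexp : ∀ p : ZMod m × ZMod n,
      GgenE (m * n) (u * ((g p).val : ℤ) ^ 2) =
        GgenE m ((u * n) * (p.1.val : ℤ) ^ 2) * GgenE n ((u * m) * (p.2.val : ℤ) ^ 2) := by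
    intro p
    set B : ℤ := (p.1.val : ℤ)
    set C : ℤ := (p.2.val : ℤ)
    have hval : ((g p).val : ℤ) ≡ n * B + m * C [ZMOD ((m * n : ℕ) : ℤ)] := by
      rw [hg]
      simp only
      rw [ZMod.val_natCast]
      have : (((n * p.1.val + m * p.2.val) % (m * n) : ℕ) : ℤ)
          = (n * B + m * C) % ((m * n : ℕ) : ℤ) := by push_cast; ring_nf; rfl
      rw [this]
      exact Int.emod_emod_of_dvd _ dvd_rfl
    calc GgenE (m * n) (u * ((g p).val : ℤ) ^ 2)
        = GgenE (m * n) (u * (n * B + m * C) ^ 2) := GgenE_sq_congr _ u hval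
      _ = GgenE (m * n) (n * ((u * n) * B ^ 2) + m * ((u * m) * C ^ 2)) := by
          apply GgenE_congr
          rw [Int.modEq_iff_dvd]
          exact ⟨-(2 * u * B * C), by push_cast; ring⟩
      _ = GgenE m ((u * n) * B ^ 2) * GgenE n ((u * m) * C ^ 2) :=
          GgenE_split m n hm0 hn0 _ _
  -- put everything together
  rw [Ggen_eq_sum_zmod u (m * n) χ,
    Ggen_eq_sum_zmod (u * n) m χ₁, Ggen_eq_sum_zmod (u * m) n χ₂]
  have h1 : ∑ x : ZMod (m * n), χ x * GgenE (m * n) (u * (x.val : ℤ) ^ 2)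
      = ∑ p : ZMod m × ZMod n, χ (g p) * GgenE (m * n) (u * (((g p).val : ℤ)) ^ 2) :=
    (Fintype.sum_bijective g hg_bij _ _ (fun p => rfl)).symm
  rw [h1]
  have hterm : ∀ p : ZMod m × ZMod n,
      χ (g p) * GgenE (m * n) (u * ((g p).val : ℤ) ^ 2) =
        (χ₁ (n : ZMod m) * χ₂ (m : ZMod n)) *
          ((χ₁ p.1 * GgenE m ((u * n) * (p.1.val : ℤ) ^ 2)) *
            (χ₂ p.2 * GgenE n ((u * m) * (p.2.val : ℤ) ^ 2))) := by
    intro p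
    rw [hchar p, hexp p, map_mul, map_mul]
    ring
  rw [Fintype.sum_congr _ _ hterm, ← Finset.mul_sum]
  rw [show (∑ p : ZMod m × ZMod n,
        χ₁ p.1 * GgenE m ((u * n) * (p.1.val : ℤ) ^ 2) *
          (χ₂ p.2 * GgenE n ((u * m) * (p.2.val : ℤ) ^ 2)))
      = (∑ x : ZMod m, χ₁ x * GgenE m ((u * n) * (x.val : ℤ) ^ 2)) *
        (∑ y : ZMod n, χ₂ y * GgenE n ((u * m) * (y.val : ℤ) ^ 2)) from by
    rw [Finset.sum_mul_sum]
    exact Fintype.sum_prod_type _]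
  ring
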